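/- arXiv:0808.2004 — 2 statements merged into one kernel-verified Lean document; each statement's English description precedes it below -/
import Mathlib

section
/- Let σ ∈ ℝ, σ ≠ 0, and let θ₀, θ₁ : ℝ² → ℝ be twice continuously differentiable functions related by the Bäcklund transformation for the hyperbolic sinh-Gordon equation with parameter σ, i.e. ∂θ₁/∂v − ∂θ₀/∂u = (σ·sinh(θ₁+θ₀) + σ⁻¹·sinh(θ₁−θ₀))/2 and ∂θ₁/∂u − ∂θ₀/∂v = (σ·sinh(θ₁+θ₀) − σ⁻¹·sinh(θ₁−θ₀))/2 everywhere. Then both θ₀ and θ₁ satisfy the hyperbolic sinh-Gordon equation: ∂²θⱼ/∂v² − ∂²θⱼ/∂u² = cosh θⱼ · sinh θⱼ for j = 0, 1, at every point of ℝ². -/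
/-- Partial derivative with respect to the first variable `u`. -/
noncomputable def pdu (f : ℝ × ℝ → ℝ) (p : ℝ × ℝ) : ℝ :=
  deriv (fun u => f (u, p.2)) p.1

/-- Partial derivative with respect to the second variable `v`. -/
noncomputable def pdv (f : ℝ × ℝ → ℝ) (p : ℝ × ℝ) : ℝ :=
  deriv (fun v => f (p.1, v)) p.2

section aux
variable {F : Type*} [NormedAddCommGroup F] [NormedSpace ℝ F]

lemma hasDerivAt_fst {f : ℝ × ℝ → F} {a b : ℝ} (hf : DifferentiableAt ℝ f (a, b)) :
    HasDerivAt (fun u => f (u, b)) (fderiv ℝ f (a, b) (1, 0)) a :=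
  hf.hasFDerivAt.comp_hasDerivAt a ((hasDerivAt_id a).prodMk (hasDerivAt_const a b))

lemma hasDerivAt_snd {f : ℝ × ℝ → F} {a b : ℝ} (hf : DifferentiableAt ℝ f (a, b)) :
    HasDerivAt (fun v => f (a, v)) (fderiv ℝ f (a, b) (0, 1)) b :=
  hf.hasFDerivAt.comp_hasDerivAt b ((hasDerivAt_const b a).prodMk (hasDerivAt_id b))

end aux

lemma pdu_eq {f : ℝ × ℝ → ℝ} {a b : ℝ} (hf : DifferentiableAt ℝ f (a, b)) :
    pdu f (a, b) = fderiv ℝ f (a, b) (1, 0) := (hasDerivAt_fst hf).deriv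

lemma pdv_eq {f : ℝ × ℝ → ℝ} {a b : ℝ} (hf : DifferentiableAt ℝ f (a, b)) :
    pdv f (a, b) = fderiv ℝ f (a, b) (0, 1) := (hasDerivAt_snd hf).deriv

lemma HDu {f : ℝ × ℝ → ℝ} (hf : Differentiable ℝ f) (a b : ℝ) :
    HasDerivAt (fun u => f (u, b)) (pdu f (a, b)) a := by
  rw [pdu_eq (hf _)]; exact hasDerivAt_fst (hf _)

lemma HDv {f : ℝ × ℝ → ℝ} (hf : Differentiable ℝ f) (a b : ℝ) :
    HasDerivAt (fun v => f (a, v)) (pdv f (a, b)) b := by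
  rw [pdv_eq (hf _)]; exact hasDerivAt_snd (hf _)

section second
variable {f : ℝ × ℝ → ℝ} (hf : ContDiff ℝ 2 f) (a b : ℝ)

include hf

private lemma hdiff : Differentiable ℝ f := hf.differentiable (by norm_num)

private lemma hg1 : ContDiff ℝ 1 (fderiv ℝ f) := hf.fderiv_right (by norm_num)

lemma HDuu : HasDerivAt (fun u => pdu f (u, b)) (fderiv ℝ (fderiv ℝ f) (a, b) (1, 0) (1, 0)) a := by
  have h := (hasDerivAt_fst (f := fderiv ℝ f) (a := a) (b := b) ((hg1 hf).differentiable (by norm_num) _)).clm_apply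
    (hasDerivAt_const a ((1 : ℝ), (0 : ℝ)))
  simp only [map_zero, add_zero] at h
  refine h.congr_of_eventuallyEq (Filter.Eventually.of_forall fun u => ?_)
  exact pdu_eq (hdiff hf _)

lemma HDuv : HasDerivAt (fun u => pdv f (u, b)) (fderiv ℝ (fderiv ℝ f) (a, b) (1, 0) (0, 1)) a := by
  have h := (hasDerivAt_fst (f := fderiv ℝ f) (a := a) (b := b) ((hg1 hf).differentiable (by norm_num) _)).clm_apply
    (hasDerivAt_const a ((0 : ℝ), (1 : ℝ)))
  simp only [map_zero, add_zero] at h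
  refine h.congr_of_eventuallyEq (Filter.Eventually.of_forall fun u => ?_)
  exact pdv_eq (hdiff hf _)

lemma HDvu : HasDerivAt (fun v => pdu f (a, v)) (fderiv ℝ (fderiv ℝ f) (a, b) (0, 1) (1, 0)) b := by
  have h := (hasDerivAt_snd (f := fderiv ℝ f) (a := a) (b := b) ((hg1 hf).differentiable (by norm_num) _)).clm_apply
    (hasDerivAt_const b ((1 : ℝ), (0 : ℝ)))
  simp only [map_zero, add_zero] at h
  refine h.congr_of_eventuallyEq (Filter.Eventually.of_forall fun v => ?_)
  exact pdu_eq (hdiff hf _)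

lemma HDvv : HasDerivAt (fun v => pdv f (a, v)) (fderiv ℝ (fderiv ℝ f) (a, b) (0, 1) (0, 1)) b := by
  have h := (hasDerivAt_snd (f := fderiv ℝ f) (a := a) (b := b) ((hg1 hf).differentiable (by norm_num) _)).clm_apply
    (hasDerivAt_const b ((0 : ℝ), (1 : ℝ)))
  simp only [map_zero, add_zero] at h
  refine h.congr_of_eventuallyEq (Filter.Eventually.of_forall fun v => ?_)
  exact pdv_eq (hdiff hf _)

lemma symm2 : fderiv ℝ (fderiv ℝ f) (a, b) (1, 0) (0, 1)
    = fderiv ℝ (fderiv ℝ f) (a, b) (0, 1) (1, 0) :=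
  (hf.contDiffAt.isSymmSndFDerivAt (by simp [minSmoothness_of_isRCLikeNormedField])) _ _

end second

section third
variable {f : ℝ × ℝ → ℝ} (hf : ContDiff ℝ 2 f) (a b : ℝ)
include hf

lemma HDuu' : HasDerivAt (fun u => pdu f (u, b)) (pdu (pdu f) (a, b)) a := by
  have h := HDuu hf a b
  have e : pdu (pdu f) (a, b) = _ := h.deriv
  rw [e]; exact h

lemma HDuv' : HasDerivAt (fun u => pdv f (u, b)) (pdu (pdv f) (a, b)) a := by
  have h := HDuv hf a b
  have e : pdu (pdv f) (a, b) = _ := h.deriv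
  rw [e]; exact h

lemma HDvu' : HasDerivAt (fun v => pdu f (a, v)) (pdv (pdu f) (a, b)) b := by
  have h := HDvu hf a b
  have e : pdv (pdu f) (a, b) = _ := h.deriv
  rw [e]; exact h

lemma HDvv' : HasDerivAt (fun v => pdv f (a, v)) (pdv (pdv f) (a, b)) b := by
  have h := HDvv hf a b
  have e : pdv (pdv f) (a, b) = _ := h.deriv
  rw [e]; exact h

lemma pduv_symm : pdu (pdv f) (a, b) = pdv (pdu f) (a, b) := by
  rw [(HDuv' hf a b).unique (HDuv hf a b), (HDvu' hf a b).unique (HDvu hf a b), symm2 hf a b]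

end third


/-- The pair `(θ₀, θ₁)` is related by the Bäcklund transformation for the
hyperbolic sinh-Gordon equation with parameter `σ`. -/
def BacklundSGh (σ : ℝ) (θ₀ θ₁ : ℝ × ℝ → ℝ) : Prop :=
  ∀ p : ℝ × ℝ,
    pdv θ₁ p - pdu θ₀ p =
      (σ * Real.sinh (θ₁ p + θ₀ p) + σ⁻¹ * Real.sinh (θ₁ p - θ₀ p)) / 2 ∧
    pdu θ₁ p - pdv θ₀ p =
      (σ * Real.sinh (θ₁ p + θ₀ p) - σ⁻¹ * Real.sinh (θ₁ p - θ₀ p)) / 2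

/-- If twice continuously differentiable `θ₀, θ₁ : ℝ² → ℝ` are related by the Bäcklund
transformation for the hyperbolic sinh-Gordon equation with parameter `σ ≠ 0`, then both
satisfy the hyperbolic sinh-Gordon equation `∂²θ/∂v² − ∂²θ/∂u² = cosh θ · sinh θ`. -/
theorem backlund_implies_hyperbolic_sinhGordon
    (σ : ℝ) (hσ : σ ≠ 0) (θ₀ θ₁ : ℝ × ℝ → ℝ)
    (hθ₀ : ContDiff ℝ 2 θ₀) (hθ₁ : ContDiff ℝ 2 θ₁)
    (hB : BacklundSGh σ θ₀ θ₁) :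
    (∀ p : ℝ × ℝ,
        pdv (pdv θ₀) p - pdu (pdu θ₀) p = Real.cosh (θ₀ p) * Real.sinh (θ₀ p)) ∧
    (∀ p : ℝ × ℝ,
        pdv (pdv θ₁) p - pdu (pdu θ₁) p = Real.cosh (θ₁ p) * Real.sinh (θ₁ p)) := by
  have hd0 : Differentiable ℝ θ₀ := hθ₀.differentiable (by norm_num)
  have hd1 : Differentiable ℝ θ₁ := hθ₁.differentiable (by norm_num)
  have hσ' : σ * σ⁻¹ = 1 := mul_inv_cancel₀ hσ
  constructor <;> rintro ⟨a, b⟩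
  · -- θ₀ case : d/du of eq1, d/dv of eq2
    have h1 := (hB (a, b)).1
    have h2 := (hB (a, b)).2
    -- derivative in u of eq1
    have hsumU : HasDerivAt (fun u => θ₁ (u, b) + θ₀ (u, b))
        (pdu θ₁ (a, b) + pdu θ₀ (a, b)) a := (HDu hd1 a b).add (HDu hd0 a b)
    have hsubU : HasDerivAt (fun u => θ₁ (u, b) - θ₀ (u, b))
        (pdu θ₁ (a, b) - pdu θ₀ (a, b)) a := (HDu hd1 a b).sub (HDu hd0 a b)
    have hR1 : HasDerivAt
        (fun u => (σ * Real.sinh (θ₁ (u, b) + θ₀ (u, b))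
            + σ⁻¹ * Real.sinh (θ₁ (u, b) - θ₀ (u, b))) / 2)
        ((σ * (Real.cosh (θ₁ (a, b) + θ₀ (a, b)) * (pdu θ₁ (a, b) + pdu θ₀ (a, b)))
            + σ⁻¹ * (Real.cosh (θ₁ (a, b) - θ₀ (a, b)) * (pdu θ₁ (a, b) - pdu θ₀ (a, b)))) / 2) a :=
      ((((Real.hasDerivAt_sinh _).comp a hsumU).const_mul σ).add
        (((Real.hasDerivAt_sinh _).comp a hsubU).const_mul σ⁻¹)).div_const 2
    have hL1 : HasDerivAt (fun u => pdv θ₁ (u, b) - pdu θ₀ (u, b))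
        (pdu (pdv θ₁) (a, b) - pdu (pdu θ₀) (a, b)) a := (HDuv' hθ₁ a b).sub (HDuu' hθ₀ a b)
    have eq1u := hL1.unique (hR1.congr_of_eventuallyEq
      (Filter.Eventually.of_forall fun u => (hB (u, b)).1))
    -- derivative in v of eq2
    have hsumV : HasDerivAt (fun v => θ₁ (a, v) + θ₀ (a, v))
        (pdv θ₁ (a, b) + pdv θ₀ (a, b)) b := (HDv hd1 a b).add (HDv hd0 a b)
    have hsubV : HasDerivAt (fun v => θ₁ (a, v) - θ₀ (a, v))
        (pdv θ₁ (a, b) - pdv θ₀ (a, b)) b := (HDv hd1 a b).sub (HDv hd0 a b)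
    have hR2 : HasDerivAt
        (fun v => (σ * Real.sinh (θ₁ (a, v) + θ₀ (a, v))
            - σ⁻¹ * Real.sinh (θ₁ (a, v) - θ₀ (a, v))) / 2)
        ((σ * (Real.cosh (θ₁ (a, b) + θ₀ (a, b)) * (pdv θ₁ (a, b) + pdv θ₀ (a, b)))
            - σ⁻¹ * (Real.cosh (θ₁ (a, b) - θ₀ (a, b)) * (pdv θ₁ (a, b) - pdv θ₀ (a, b)))) / 2) b :=
      ((((Real.hasDerivAt_sinh _).comp b hsumV).const_mul σ).sub
        (((Real.hasDerivAt_sinh _).comp b hsubV).const_mul σ⁻¹)).div_const 2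
    have hL2 : HasDerivAt (fun v => pdu θ₁ (a, v) - pdv θ₀ (a, v))
        (pdv (pdu θ₁) (a, b) - pdv (pdv θ₀) (a, b)) b := (HDvu' hθ₁ a b).sub (HDvv' hθ₀ a b)
    have eq2v := hL2.unique (hR2.congr_of_eventuallyEq
      (Filter.Eventually.of_forall fun v => (hB (a, v)).2))
    rw [pduv_symm hθ₁ a b] at eq1u
    have k0 : Real.cosh (θ₁ (a, b) - θ₀ (a, b)) * Real.sinh (θ₁ (a, b) + θ₀ (a, b))
        - Real.cosh (θ₁ (a, b) + θ₀ (a, b)) * Real.sinh (θ₁ (a, b) - θ₀ (a, b))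
        = 2 * (Real.cosh (θ₀ (a, b)) * Real.sinh (θ₀ (a, b))) := by
      have h := Real.sinh_sub (θ₁ (a, b) + θ₀ (a, b)) (θ₁ (a, b) - θ₀ (a, b))
      rw [show (θ₁ (a, b) + θ₀ (a, b)) - (θ₁ (a, b) - θ₀ (a, b)) = 2 * θ₀ (a, b) by ring,
        Real.sinh_two_mul] at h
      linear_combination -h
    linear_combination eq1u - eq2v
      + (σ * Real.cosh (θ₁ (a, b) + θ₀ (a, b)) / 2) * (h2 - h1)
      + (σ⁻¹ * Real.cosh (θ₁ (a, b) - θ₀ (a, b)) / 2) * (h1 + h2)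
      + (σ * σ⁻¹ / 2) * k0
      + (Real.cosh (θ₀ (a, b)) * Real.sinh (θ₀ (a, b))) * hσ'
  · -- θ₁ case : d/dv of eq1, d/du of eq2
    have h1 := (hB (a, b)).1
    have h2 := (hB (a, b)).2
    have hsumV : HasDerivAt (fun v => θ₁ (a, v) + θ₀ (a, v))
        (pdv θ₁ (a, b) + pdv θ₀ (a, b)) b := (HDv hd1 a b).add (HDv hd0 a b)
    have hsubV : HasDerivAt (fun v => θ₁ (a, v) - θ₀ (a, v))
        (pdv θ₁ (a, b) - pdv θ₀ (a, b)) b := (HDv hd1 a b).sub (HDv hd0 a b)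
    have hR1 : HasDerivAt
        (fun v => (σ * Real.sinh (θ₁ (a, v) + θ₀ (a, v))
            + σ⁻¹ * Real.sinh (θ₁ (a, v) - θ₀ (a, v))) / 2)
        ((σ * (Real.cosh (θ₁ (a, b) + θ₀ (a, b)) * (pdv θ₁ (a, b) + pdv θ₀ (a, b)))
            + σ⁻¹ * (Real.cosh (θ₁ (a, b) - θ₀ (a, b)) * (pdv θ₁ (a, b) - pdv θ₀ (a, b)))) / 2) b :=
      ((((Real.hasDerivAt_sinh _).comp b hsumV).const_mul σ).add
        (((Real.hasDerivAt_sinh _).comp b hsubV).const_mul σ⁻¹)).div_const 2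
    have hL1 : HasDerivAt (fun v => pdv θ₁ (a, v) - pdu θ₀ (a, v))
        (pdv (pdv θ₁) (a, b) - pdv (pdu θ₀) (a, b)) b := (HDvv' hθ₁ a b).sub (HDvu' hθ₀ a b)
    have eq1v := hL1.unique (hR1.congr_of_eventuallyEq
      (Filter.Eventually.of_forall fun v => (hB (a, v)).1))
    have hsumU : HasDerivAt (fun u => θ₁ (u, b) + θ₀ (u, b))
        (pdu θ₁ (a, b) + pdu θ₀ (a, b)) a := (HDu hd1 a b).add (HDu hd0 a b)
    have hsubU : HasDerivAt (fun u => θ₁ (u, b) - θ₀ (u, b))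
        (pdu θ₁ (a, b) - pdu θ₀ (a, b)) a := (HDu hd1 a b).sub (HDu hd0 a b)
    have hR2 : HasDerivAt
        (fun u => (σ * Real.sinh (θ₁ (u, b) + θ₀ (u, b))
            - σ⁻¹ * Real.sinh (θ₁ (u, b) - θ₀ (u, b))) / 2)
        ((σ * (Real.cosh (θ₁ (a, b) + θ₀ (a, b)) * (pdu θ₁ (a, b) + pdu θ₀ (a, b)))
            - σ⁻¹ * (Real.cosh (θ₁ (a, b) - θ₀ (a, b)) * (pdu θ₁ (a, b) - pdu θ₀ (a, b)))) / 2) a :=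
      ((((Real.hasDerivAt_sinh _).comp a hsumU).const_mul σ).sub
        (((Real.hasDerivAt_sinh _).comp a hsubU).const_mul σ⁻¹)).div_const 2
    have hL2 : HasDerivAt (fun u => pdu θ₁ (u, b) - pdv θ₀ (u, b))
        (pdu (pdu θ₁) (a, b) - pdu (pdv θ₀) (a, b)) a := (HDuu' hθ₁ a b).sub (HDuv' hθ₀ a b)
    have eq2u := hL2.unique (hR2.congr_of_eventuallyEq
      (Filter.Eventually.of_forall fun u => (hB (u, b)).2))
    rw [pduv_symm hθ₀ a b] at eq2u
    have k1 : Real.cosh (θ₁ (a, b) + θ₀ (a, b)) * Real.sinh (θ₁ (a, b) - θ₀ (a, b))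
        + Real.cosh (θ₁ (a, b) - θ₀ (a, b)) * Real.sinh (θ₁ (a, b) + θ₀ (a, b))
        = 2 * (Real.cosh (θ₁ (a, b)) * Real.sinh (θ₁ (a, b))) := by
      have h := Real.sinh_add (θ₁ (a, b) + θ₀ (a, b)) (θ₁ (a, b) - θ₀ (a, b))
      rw [show (θ₁ (a, b) + θ₀ (a, b)) + (θ₁ (a, b) - θ₀ (a, b)) = 2 * θ₁ (a, b) by ring,
        Real.sinh_two_mul] at h
      linear_combination -h
    linear_combination eq1v - eq2u
      + (σ * Real.cosh (θ₁ (a, b) + θ₀ (a, b)) / 2) * (h1 - h2)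
      + (σ⁻¹ * Real.cosh (θ₁ (a, b) - θ₀ (a, b)) / 2) * (h1 + h2)
      + (σ * σ⁻¹ / 2) * k1
      + (Real.cosh (θ₁ (a, b)) * Real.sinh (θ₁ (a, b))) * hσ'
end

section
/- Let t ∈ ℝ and let ω, θ : ℝ² → ℝ be twice continuously differentiable functions satisfying the real form of the elliptic Bäcklund system with parameter σ = e^{it}: ∂θ/∂v − ∂ω/∂u = sinh θ · cos ω · cos t + cosh θ · sin ω · sin t and ∂θ/∂u + ∂ω/∂v = sinh θ · cos ω · sin t − cosh θ · sin ω · cos t at every point of ℝ². Then ω satisfies the elliptic sine-Gordon equation ∂²ω/∂u² + ∂²ω/∂v² = cos ω · sin ω and θ satisfies the elliptic sinh-Gordon equation ∂²θ/∂u² + ∂²θ/∂v² = cosh θ · sinh θ at every point of ℝ². -/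
lemma hasDerivAt_slice_u (f : ℝ × ℝ → ℝ) (p : ℝ × ℝ) (hf : DifferentiableAt ℝ f p) :
    HasDerivAt (fun u => f (u, p.2)) (fderiv ℝ f p (1, 0)) p.1 := by
  have h1 : HasDerivAt (fun u : ℝ => (u, p.2)) ((1 : ℝ), (0 : ℝ)) p.1 :=
    (hasDerivAt_id p.1).prodMk (hasDerivAt_const p.1 p.2)
  have := hf.hasFDerivAt.comp_hasDerivAt p.1 (by simpa using h1)
  exact this

lemma hasDerivAt_slice_v (f : ℝ × ℝ → ℝ) (p : ℝ × ℝ) (hf : DifferentiableAt ℝ f p) :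
    HasDerivAt (fun v => f (p.1, v)) (fderiv ℝ f p (0, 1)) p.2 := by
  have h1 : HasDerivAt (fun v : ℝ => (p.1, v)) ((0 : ℝ), (1 : ℝ)) p.2 :=
    (hasDerivAt_const p.2 p.1).prodMk (hasDerivAt_id p.2)
  have := hf.hasFDerivAt.comp_hasDerivAt p.2 (by simpa using h1)
  exact this

lemma hasDerivAt_pdu (f : ℝ × ℝ → ℝ) (p : ℝ × ℝ) (hf : DifferentiableAt ℝ f p) :
    HasDerivAt (fun u => f (u, p.2)) (pdu f p) p.1 := by
  have h := hasDerivAt_slice_u f p hf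
  have : pdu f p = fderiv ℝ f p (1, 0) := h.deriv
  rw [this]; exact h

lemma hasDerivAt_pdv (f : ℝ × ℝ → ℝ) (p : ℝ × ℝ) (hf : DifferentiableAt ℝ f p) :
    HasDerivAt (fun v => f (p.1, v)) (pdv f p) p.2 := by
  have h := hasDerivAt_slice_v f p hf
  have : pdv f p = fderiv ℝ f p (0, 1) := h.deriv
  rw [this]; exact h

lemma pdu_eq_s7 (f : ℝ × ℝ → ℝ) (hf : Differentiable ℝ f) :
    pdu f = fun p => fderiv ℝ f p (1, 0) :=
  funext fun p => (hasDerivAt_slice_u f p (hf p)).deriv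

lemma pdv_eq_s7 (f : ℝ × ℝ → ℝ) (hf : Differentiable ℝ f) :
    pdv f = fun p => fderiv ℝ f p (0, 1) :=
  funext fun p => (hasDerivAt_slice_v f p (hf p)).deriv

lemma contDiff_pdu (f : ℝ × ℝ → ℝ) (hf : ContDiff ℝ 2 f) : ContDiff ℝ 1 (pdu f) := by
  rw [pdu_eq_s7 f (hf.differentiable two_ne_zero)]
  exact (hf.fderiv_right (le_refl 2)).clm_apply contDiff_const

lemma contDiff_pdv (f : ℝ × ℝ → ℝ) (hf : ContDiff ℝ 2 f) : ContDiff ℝ 1 (pdv f) := by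
  rw [pdv_eq_s7 f (hf.differentiable two_ne_zero)]
  exact (hf.fderiv_right (le_refl 2)).clm_apply contDiff_const

lemma snd_fderiv_apply (f : ℝ × ℝ → ℝ) (hf : ContDiff ℝ 2 f) (p : ℝ × ℝ) (a b : ℝ × ℝ) :
    fderiv ℝ (fun q => fderiv ℝ f q a) p b = fderiv ℝ (fderiv ℝ f) p b a := by
  have hd : DifferentiableAt ℝ (fderiv ℝ f) p :=
    ((hf.fderiv_right (m := 1) (le_refl 2)).differentiable one_ne_zero) p
  rw [fderiv_clm_apply hd (differentiableAt_const a)]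
  simp

lemma mixed_symm (f : ℝ × ℝ → ℝ) (hf : ContDiff ℝ 2 f) (p : ℝ × ℝ) :
    pdu (pdv f) p = pdv (pdu f) p := by
  have h1 : Differentiable ℝ f := hf.differentiable two_ne_zero
  have hu := contDiff_pdu f hf
  have hv := contDiff_pdv f hf
  have e1 : pdu (pdv f) p = fderiv ℝ (pdv f) p (1, 0) :=
    (hasDerivAt_slice_u (pdv f) p ((hv.differentiable one_ne_zero) p)).deriv
  have e2 : pdv (pdu f) p = fderiv ℝ (pdu f) p (0, 1) :=
    (hasDerivAt_slice_v (pdu f) p ((hu.differentiable one_ne_zero) p)).deriv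
  rw [e1, e2, pdv_eq_s7 f h1, pdu_eq_s7 f h1, snd_fderiv_apply f hf, snd_fderiv_apply f hf]
  exact (hf.contDiffAt.isSymmSndFDerivAt (by norm_num)) _ _

/-- If twice continuously differentiable `ω, θ : ℝ² → ℝ` satisfy the real form of the
elliptic Bäcklund system with unit-modulus parameter `σ = e^{it}`:
`∂θ/∂v − ∂ω/∂u = sinh θ · cos ω · cos t + cosh θ · sin ω · sin t` and
`∂θ/∂u + ∂ω/∂v = sinh θ · cos ω · sin t − cosh θ · sin ω · cos t`,
then `ω` satisfies the elliptic sine-Gordon equation and `θ` satisfies the elliptic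
sinh-Gordon equation. -/
theorem elliptic_backlund_implies_elliptic_equations
    (t : ℝ) (ω θ : ℝ × ℝ → ℝ)
    (hω : ContDiff ℝ 2 ω) (hθ : ContDiff ℝ 2 θ)
    (hB1 : ∀ p : ℝ × ℝ,
      pdv θ p - pdu ω p =
        Real.sinh (θ p) * Real.cos (ω p) * Real.cos t
          + Real.cosh (θ p) * Real.sin (ω p) * Real.sin t)
    (hB2 : ∀ p : ℝ × ℝ,
      pdu θ p + pdv ω p =
        Real.sinh (θ p) * Real.cos (ω p) * Real.sin t
          - Real.cosh (θ p) * Real.sin (ω p) * Real.cos t) :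
    (∀ p : ℝ × ℝ,
        pdu (pdu ω) p + pdv (pdv ω) p = Real.cos (ω p) * Real.sin (ω p)) ∧
    (∀ p : ℝ × ℝ,
        pdu (pdu θ) p + pdv (pdv θ) p = Real.cosh (θ p) * Real.sinh (θ p)) := by
  have hθd : Differentiable ℝ θ := hθ.differentiable two_ne_zero
  have hωd : Differentiable ℝ ω := hω.differentiable two_ne_zero
  have hpduθ : Differentiable ℝ (pdu θ) := (contDiff_pdu θ hθ).differentiable one_ne_zero
  have hpdvθ : Differentiable ℝ (pdv θ) := (contDiff_pdv θ hθ).differentiable one_ne_zero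
  have hpduω : Differentiable ℝ (pdu ω) := (contDiff_pdu ω hω).differentiable one_ne_zero
  have hpdvω : Differentiable ℝ (pdv ω) := (contDiff_pdv ω hω).differentiable one_ne_zero
  have key : ∀ p : ℝ × ℝ,
      (pdu (pdu ω) p + pdv (pdv ω) p = Real.cos (ω p) * Real.sin (ω p)) ∧
      (pdu (pdu θ) p + pdv (pdv θ) p = Real.cosh (θ p) * Real.sinh (θ p)) := by
    intro p
    -- first-order slice derivatives
    have Hθu := hasDerivAt_pdu θ p (hθd p)
    have Hθv := hasDerivAt_pdv θ p (hθd p)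
    have Hωu := hasDerivAt_pdu ω p (hωd p)
    have Hωv := hasDerivAt_pdv ω p (hωd p)
    -- RHS derivatives along u and v
    have HR1u := ((Hθu.sinh.mul Hωu.cos).mul_const (Real.cos t)).add
      ((Hθu.cosh.mul Hωu.sin).mul_const (Real.sin t))
    have HR1v := ((Hθv.sinh.mul Hωv.cos).mul_const (Real.cos t)).add
      ((Hθv.cosh.mul Hωv.sin).mul_const (Real.sin t))
    have HR2u := ((Hθu.sinh.mul Hωu.cos).mul_const (Real.sin t)).sub
      ((Hθu.cosh.mul Hωu.sin).mul_const (Real.cos t))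
    have HR2v := ((Hθv.sinh.mul Hωv.cos).mul_const (Real.sin t)).sub
      ((Hθv.cosh.mul Hωv.sin).mul_const (Real.cos t))
    -- LHS derivatives
    have HL1u := (hasDerivAt_pdu (pdv θ) p (hpdvθ p)).sub (hasDerivAt_pdu (pdu ω) p (hpduω p))
    have HL1v := (hasDerivAt_pdv (pdv θ) p (hpdvθ p)).sub (hasDerivAt_pdv (pdu ω) p (hpduω p))
    have HL2u := (hasDerivAt_pdu (pdu θ) p (hpduθ p)).add (hasDerivAt_pdu (pdv ω) p (hpdvω p))
    have HL2v := (hasDerivAt_pdv (pdu θ) p (hpduθ p)).add (hasDerivAt_pdv (pdv ω) p (hpdvω p))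
    -- rewrite LHS functions using the Bäcklund system
    have hf1u : (fun u => pdv θ (u, p.2) - pdu ω (u, p.2)) =
        (fun u => Real.sinh (θ (u, p.2)) * Real.cos (ω (u, p.2)) * Real.cos t
          + Real.cosh (θ (u, p.2)) * Real.sin (ω (u, p.2)) * Real.sin t) :=
      funext fun u => hB1 (u, p.2)
    have hf1v : (fun v => pdv θ (p.1, v) - pdu ω (p.1, v)) =
        (fun v => Real.sinh (θ (p.1, v)) * Real.cos (ω (p.1, v)) * Real.cos t
          + Real.cosh (θ (p.1, v)) * Real.sin (ω (p.1, v)) * Real.sin t) :=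
      funext fun v => hB1 (p.1, v)
    have hf2u : (fun u => pdu θ (u, p.2) + pdv ω (u, p.2)) =
        (fun u => Real.sinh (θ (u, p.2)) * Real.cos (ω (u, p.2)) * Real.sin t
          - Real.cosh (θ (u, p.2)) * Real.sin (ω (u, p.2)) * Real.cos t) :=
      funext fun u => hB2 (u, p.2)
    have hf2v : (fun v => pdu θ (p.1, v) + pdv ω (p.1, v)) =
        (fun v => Real.sinh (θ (p.1, v)) * Real.cos (ω (p.1, v)) * Real.sin t
          - Real.cosh (θ (p.1, v)) * Real.sin (ω (p.1, v)) * Real.cos t) :=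
      funext fun v => hB2 (p.1, v)
    rw [show ((fun u => pdv θ (u, p.2)) - fun u => pdu ω (u, p.2)) = _ from hf1u] at HL1u
    rw [show ((fun v => pdv θ (p.1, v)) - fun v => pdu ω (p.1, v)) = _ from hf1v] at HL1v
    rw [show ((fun u => pdu θ (u, p.2)) + fun u => pdv ω (u, p.2)) = _ from hf2u] at HL2u
    rw [show ((fun v => pdu θ (p.1, v)) + fun v => pdv ω (p.1, v)) = _ from hf2v] at HL2v
    have E1u := HL1u.unique HR1u
    have E1v := HL1v.unique HR1v
    have E2u := HL2u.unique HR2u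
    have E2v := HL2v.unique HR2v
    simp only [Prod.mk.eta] at E1u E1v E2u E2v
    have symθ := mixed_symm θ hθ p
    have symω := mixed_symm ω hω p
    have hb1 := hB1 p
    have hb2 := hB2 p
    have hp := Real.sin_sq_add_cos_sq t
    have hpω := Real.sin_sq_add_cos_sq (ω p)
    have hch := Real.cosh_sq_sub_sinh_sq (θ p)
    constructor
    · linear_combination E2v - E1u + symθ
        + (Real.cosh (θ p) * Real.cos (ω p) * Real.sin t
            - Real.sinh (θ p) * Real.sin (ω p) * Real.cos t) * hb1
        - (Real.cosh (θ p) * Real.cos (ω p) * Real.cos t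
            + Real.sinh (θ p) * Real.sin (ω p) * Real.sin t) * hb2
        + Real.sin (ω p) * Real.cos (ω p) * (Real.sin t ^ 2 + Real.cos t ^ 2) * hch
        + Real.sin (ω p) * Real.cos (ω p) * hp
    · linear_combination E2u + E1v - symω
        + (Real.cosh (θ p) * Real.cos (ω p) * Real.cos t
            + Real.sinh (θ p) * Real.sin (ω p) * Real.sin t) * hb1
        + (Real.cosh (θ p) * Real.cos (ω p) * Real.sin t
            - Real.sinh (θ p) * Real.sin (ω p) * Real.cos t) * hb2
        + Real.sinh (θ p) * Real.cosh (θ p) * (Real.sin t ^ 2 + Real.cos t ^ 2) * hpω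
        + Real.sinh (θ p) * Real.cosh (θ p) * hp
  exact ⟨fun p => (key p).1, fun p => (key p).2⟩
end
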